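/- With H, J, H^∨ as above, let C_q ⊆ H be a unital subalgebra and left coideal, and let C_q^▽ be the unital C[q,q⁻¹]-subalgebra of H^∨ generated by (q−1)⁻¹(C_q ∩ J). Then C_q^▽ is a left coideal of H^∨, i.e. Δ(C_q^▽) ⊆ H^∨ ⊗ C_q^▽. -/

import Mathlib

set_option synthInstance.maxHeartbeats 1000000
set_option maxHeartbeats 1000000

/- STATEMENT 15: for a torsion-free Hopf algebra H over ℂ[q,q⁻¹] (an integral form of a
   Hopf algebra A over ℂ(q)) and a unital subalgebra and left coideal C_q ⊆ H, the subalgebra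
   C_q^▽ of H^∨ generated by (q−1)⁻¹(C_q ∩ J) is a left coideal of H^∨:
   Δ(C_q^▽) ⊆ H^∨ ⊗ C_q^▽. -/

open scoped TensorProduct
open PiTensorProduct

namespace GQDP

/-- The ground ring `ℂ[q,q⁻¹]` of complex Laurent polynomials. -/
abbrev R : Type := LaurentPolynomial ℂ

/-- The field `ℂ(q)` of rational functions, realized as the fraction field of `ℂ[q,q⁻¹]`. -/
abbrev K : Type := FractionRing R

/-- The indeterminate `q`, as an element of `ℂ[q,q⁻¹]`. -/
noncomputable def q : R := LaurentPolynomial.T 1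

/-- The indeterminate `q`, as an element of `ℂ(q)`. -/
noncomputable def qK : K := algebraMap R K q

/- `A` is a Hopf algebra over `ℂ(q)` (playing the role of `H ⊗_{ℂ[q,q⁻¹]} ℂ(q)`), in which
   all the `ℂ[q,q⁻¹]`-integral forms below live as `R`-submodules. -/
variable (A : Type*) [Ring A] [HopfAlgebra K A] [Algebra R A] [IsScalarTower R K A]

/-- Scaling of an `R`-submodule of `A` by a scalar `c ∈ ℂ(q)`. -/
noncomputable def ksmul (c : K) (p : Submodule R A) : Submodule R A :=
  Submodule.span R ((fun a => c • a) '' (p : Set A))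

/-- The "tensor product" of two `R`-submodules of `A` inside `A ⊗[ℂ(q)] A`: the additive
    subgroup generated by the corresponding pure tensors (this is also their `R`-span). -/
noncomputable def tsubK (P Q : Submodule R A) : AddSubgroup (A ⊗[K] A) :=
  AddSubgroup.closure {z | ∃ p ∈ P, ∃ r ∈ Q, z = p ⊗ₜ[K] r}

/-- The augmentation ideal `J := H ∩ ker ε` of an integral form `H ⊆ A`. -/
noncomputable def Jform (H : Submodule R A) : Submodule R A :=
  H ⊓ (LinearMap.ker (Coalgebra.counit : A →ₗ[K] K)).restrictScalars R

/-- Drinfeld's algebra `H^∨ := Σ_{n≥0} (q−1)^{−n} Jⁿ`. -/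
noncomputable def Hvee (H : Submodule R A) : Submodule R A :=
  ⨆ n : ℕ, ksmul A (((qK - 1)⁻¹) ^ n) ((Jform A H) ^ n)

/-- `H` is a Hopf-algebra integral form of `A` over `ℂ[q,q⁻¹]`: a unital `R`-subalgebra,
    with `Δ(H) ⊆ H ⊗ H`, `ε(H) ⊆ ℂ[q,q⁻¹]` and `S(H) ⊆ H`. -/
structure IsHopfForm (H : Submodule R A) : Prop where
  one_mem : (1 : A) ∈ H
  mul_mem : ∀ x ∈ H, ∀ y ∈ H, x * y ∈ H
  comul_mem : ∀ x ∈ H, Coalgebra.comul (R := K) x ∈ tsubK A H H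
  counit_mem : ∀ x ∈ H, ∃ r : R, Coalgebra.counit (R := K) x = algebraMap R K r
  antipode_mem : ∀ x ∈ H, HopfAlgebra.antipode (R := K) x ∈ H

/-- `C^▽`: the unital `R`-subalgebra of `A` generated by `(q−1)⁻¹·(C ∩ J)`. -/
noncomputable def Cvee (C : Submodule R A) : Subalgebra R A :=
  Algebra.adjoin R
    ((ksmul A ((qK - 1)⁻¹)
      (C ⊓ (LinearMap.ker (Coalgebra.counit : A →ₗ[K] K)).restrictScalars R) : Submodule R A) : Set A)


section Aux

variable {A}

lemma smulCommClass_RKA : SMulCommClass R K A := by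
  constructor
  intro r k a
  calc r • k • a = algebraMap R K r • k • a := (algebraMap_smul K r (k • a)).symm
    _ = (algebraMap R K r * k) • a := smul_smul (algebraMap R K r) k a
    _ = (k * algebraMap R K r) • a := by rw [mul_comm]
    _ = k • algebraMap R K r • a := (smul_smul k (algebraMap R K r) a).symm
    _ = k • r • a := by rw [algebraMap_smul K r a]

lemma smulCommClass_KKA : SMulCommClass K K A := by
  constructor
  intro a b c
  calc a • b • c = (a * b) • c := smul_smul a b c
    _ = (b * a) • c := by rw [mul_comm]
    _ = b • a • c := (smul_smul b a c).symm

lemma mem_ksmul_iff {k : K} {p : Submodule R A} {x : A} :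
    x ∈ ksmul A k p ↔ ∃ a ∈ p, x = k • a := by
  constructor
  · intro hx
    refine Submodule.span_induction ?_ ?_ ?_ ?_ hx
    · rintro y ⟨a, ha, rfl⟩; exact ⟨a, ha, rfl⟩
    · exact ⟨0, p.zero_mem, (smul_zero k).symm⟩
    · rintro y z - - ⟨a, ha, rfl⟩ ⟨b, hb, rfl⟩
      exact ⟨a + b, p.add_mem ha hb, (smul_add k a b).symm⟩
    · rintro r y - ⟨a, ha, rfl⟩
      haveI := smulCommClass_RKA (A := A)
      exact ⟨r • a, p.smul_mem r ha, (smul_comm r k a)⟩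

  · rintro ⟨a, ha, rfl⟩
    exact Submodule.subset_span ⟨a, ha, rfl⟩

lemma tmul_mem_tsubK {P Q : Submodule R A} {p r : A} (hp : p ∈ P) (hr : r ∈ Q) :
    p ⊗ₜ[K] r ∈ tsubK A P Q :=
  AddSubgroup.subset_closure ⟨p, hp, r, hr, rfl⟩

lemma q_sub_one_ne : (q : R) - 1 ≠ 0 := by
  have h : (q : R) - 1 = Polynomial.toLaurent (Polynomial.X - Polynomial.C (1 : ℂ)) := by
    rw [map_sub, Polynomial.toLaurent_X, Polynomial.toLaurent_C, q, LaurentPolynomial.C_eq_algebraMap,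
      _root_.map_one]
  rw [h, Ne, Polynomial.toLaurent_eq_zero]
  exact Polynomial.X_sub_C_ne_zero 1

lemma qK_sub_one_ne : (qK : K) - 1 ≠ 0 := by
  have : (qK : K) - 1 = algebraMap R K ((q : R) - 1) := by
    rw [map_sub, _root_.map_one, qK]
  rw [this]
  intro h
  exact q_sub_one_ne ((IsFractionRing.to_map_eq_zero_iff (K := K)).mp h)

lemma mem_Hvee_of_term {H : Submodule R A} {n : ℕ} {x : A}
    (hx : x ∈ ksmul A (((qK - 1)⁻¹) ^ n) ((Jform A H) ^ n)) : x ∈ Hvee A H :=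
  Submodule.mem_iSup_of_mem n hx

lemma one_mem_Hvee {H : Submodule R A} : (1 : A) ∈ Hvee A H := by
  refine mem_Hvee_of_term (n := 0) ?_
  rw [mem_ksmul_iff]
  exact ⟨1, by rw [pow_zero]; exact Submodule.one_le.mp le_rfl,
    by rw [pow_zero]; exact (one_smul K (1 : A)).symm⟩

lemma counit_smul_one (r : R) :
    Coalgebra.counit (R := K) ((r • 1 : A)) = algebraMap R K r := by
  rw [← algebraMap_smul K r (1 : A), map_smul, Bialgebra.counit_one, smul_eq_mul, mul_one]

lemma H_le_Hvee {H : Submodule R A} (hH : IsHopfForm A H) : H ≤ Hvee A H := by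
  intro h hh
  obtain ⟨r, hr⟩ := hH.counit_mem h hh
  have h1 : (r • 1 : A) ∈ Hvee A H := by
    refine mem_Hvee_of_term (n := 0) ?_
    rw [mem_ksmul_iff]
    exact ⟨r • 1, by rw [pow_zero]; exact Submodule.smul_mem _ _ (Submodule.one_le.mp le_rfl),
      by rw [pow_zero]; exact (one_smul K (r • (1 : A))).symm⟩
  have hj : h - r • 1 ∈ Jform A H := by
    constructor
    · exact Submodule.sub_mem _ hh (Submodule.smul_mem _ _ hH.one_mem)
    · show h - r • 1 ∈ LinearMap.ker (Coalgebra.counit : A →ₗ[K] K)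
      rw [LinearMap.mem_ker, map_sub, hr, counit_smul_one, sub_self]
  have h2 : h - r • 1 ∈ Hvee A H := by
    refine mem_Hvee_of_term (n := 1) ?_
    rw [mem_ksmul_iff]
    refine ⟨(q - 1) • (h - r • 1), by rw [pow_one]; exact Submodule.smul_mem _ _ hj, ?_⟩
    rw [← algebraMap_smul K (q - 1) (h - r • 1), smul_smul, pow_one, map_sub, _root_.map_one]
    rw [show algebraMap R K q = qK from rfl, inv_mul_cancel₀ qK_sub_one_ne, one_smul]
  have := Submodule.add_mem _ h1 h2
  rwa [add_sub_cancel] at this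

lemma Hvee_mul_mem {H : Submodule R A} {x y : A} (hx : x ∈ Hvee A H) (hy : y ∈ Hvee A H) :
    x * y ∈ Hvee A H := by
  refine Submodule.iSup_induction _ (motive := fun x => x * y ∈ Hvee A H) hx
    (fun n a ha => ?_) ?_ ?_
  · refine Submodule.iSup_induction _ (motive := fun y => a * y ∈ Hvee A H) hy
      (fun m b hb => ?_) ?_ ?_
    · obtain ⟨j, hj, rfl⟩ := mem_ksmul_iff.mp ha
      obtain ⟨j', hj', rfl⟩ := mem_ksmul_iff.mp hb
      refine mem_Hvee_of_term (n := n + m) ?_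
      rw [mem_ksmul_iff]
      refine ⟨j * j', by rw [pow_add]; exact Submodule.mul_mem_mul hj hj', ?_⟩
      calc ((qK - 1)⁻¹ ^ n • j) * ((qK - 1)⁻¹ ^ m • j')
          = (qK - 1)⁻¹ ^ n • (j * ((qK - 1)⁻¹ ^ m • j')) := smul_mul_assoc _ _ _
        _ = (qK - 1)⁻¹ ^ n • ((qK - 1)⁻¹ ^ m • (j * j')) := by
            rw [mul_smul_comm]
        _ = ((qK - 1)⁻¹ ^ n * (qK - 1)⁻¹ ^ m) • (j * j') := smul_smul ((qK - 1)⁻¹ ^ n) ((qK - 1)⁻¹ ^ m) (j * j')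
        _ = ((qK - 1)⁻¹ ^ (n + m)) • (j * j') := by rw [← pow_add]
    · show a * 0 ∈ Hvee A H
      rw [mul_zero]; exact zero_mem _
    · intro c d hc hd
      show a * (c + d) ∈ Hvee A H
      rw [mul_add]; exact add_mem hc hd
  · show (0 : A) * y ∈ Hvee A H
    rw [zero_mul]; exact zero_mem _
  · intro c d hc hd
    show (c + d) * y ∈ Hvee A H
    rw [add_mul]; exact add_mem hc hd

lemma tsubK_mul_mem {P Q : Submodule R A} (hP : ∀ x ∈ P, ∀ y ∈ P, x * y ∈ P)
    (hQ : ∀ x ∈ Q, ∀ y ∈ Q, x * y ∈ Q) {z w : A ⊗[K] A}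
    (hz : z ∈ tsubK A P Q) (hw : w ∈ tsubK A P Q) : z * w ∈ tsubK A P Q := by
  refine AddSubgroup.closure_induction (fun a ha => ?_)
    (by show (0 : A ⊗[K] A) * w ∈ tsubK A P Q; rw [zero_mul]; exact zero_mem _)
    (fun a b _ _ hab hbb => by
      show (a + b) * w ∈ tsubK A P Q; rw [add_mul]; exact add_mem hab hbb)
    (fun a _ hab => by
      show (-a) * w ∈ tsubK A P Q
      rw [show -a * w = -(a * w) from neg_mul a w]; exact neg_mem hab) hz
  obtain ⟨p, hp, r, hr, rfl⟩ := ha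
  refine AddSubgroup.closure_induction (fun b hb => ?_)
    (by show p ⊗ₜ[K] r * (0 : A ⊗[K] A) ∈ tsubK A P Q; rw [mul_zero]; exact zero_mem _)
    (fun a b _ _ hab hbb => by
      show p ⊗ₜ[K] r * (a + b) ∈ tsubK A P Q; rw [mul_add]; exact add_mem hab hbb)
    (fun a _ hab => by
      show p ⊗ₜ[K] r * (-a) ∈ tsubK A P Q
      rw [show p ⊗ₜ[K] r * -a = -(p ⊗ₜ[K] r * a) from mul_neg (p ⊗ₜ[K] r) a]
      exact neg_mem hab) hw
  obtain ⟨p', hp', r', hr', rfl⟩ := hb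
  rw [Algebra.TensorProduct.tmul_mul_tmul]
  exact tmul_mem_tsubK (hP _ hp _ hp') (hQ _ hr _ hr')

/-- The map `a ⊗ b ↦ ε(b) • a`. -/
noncomputable def epsR : A ⊗[K] A →ₗ[K] A :=
  (TensorProduct.rid K A).toLinearMap ∘ₗ LinearMap.lTensor A (Coalgebra.counit : A →ₗ[K] K)

lemma epsR_tmul (a b : A) :
    epsR (a ⊗ₜ[K] b) = Coalgebra.counit (R := K) b • a := by
  simp [epsR, TensorProduct.rid_tmul]

lemma epsR_comul (a : A) : epsR (Coalgebra.comul (R := K) a) = a := by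
  simp [epsR]

lemma key_lemma {H C : Submodule R A} (hH : IsHopfForm A H) (hCH : C ≤ H)
    (hC1 : (1 : A) ∈ C) {z : A ⊗[K] A} (hz : z ∈ tsubK A H C) :
    epsR z ∈ H ∧ (qK - 1)⁻¹ • (z - (epsR z) ⊗ₜ[K] (1 : A)) ∈
      tsubK A (Hvee A H) (Subalgebra.toSubmodule (Cvee A C)) := by
  refine AddSubgroup.closure_induction (fun a ha => ?_) ?_ ?_ ?_ hz
  · obtain ⟨p, hp, c, hc, rfl⟩ := ha
    obtain ⟨r, hr⟩ := hH.counit_mem c (hCH hc)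
    have heps : epsR (p ⊗ₜ[K] c) = r • p := by
      rw [epsR_tmul p c, hr]
      exact algebraMap_smul K r p
    constructor
    · rw [heps]; exact Submodule.smul_mem _ _ hp
    · have e1 : (r • p) ⊗ₜ[K] (1 : A) = p ⊗ₜ[K] (r • (1 : A)) := by
        rw [show r • p = (algebraMap R K r) • p from (algebraMap_smul K r p).symm,
          show r • (1 : A) = (algebraMap R K r) • (1 : A) from (algebraMap_smul K r (1 : A)).symm]
        exact TensorProduct.smul_tmul (algebraMap R K r) p (1 : A)
      have e2 : p ⊗ₜ[K] c - p ⊗ₜ[K] (r • (1 : A)) = p ⊗ₜ[K] (c - r • (1 : A)) :=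
        (TensorProduct.tmul_sub p c (r • (1 : A))).symm
      have hstep : (qK - 1)⁻¹ • (p ⊗ₜ[K] c - (epsR (p ⊗ₜ[K] c)) ⊗ₜ[K] (1 : A))
          = p ⊗ₜ[K] ((qK - 1)⁻¹ • (c - r • (1 : A))) := by
        rw [heps, e1, e2]
        exact (TensorProduct.tmul_smul ((qK - 1)⁻¹) p (c - r • (1 : A))).symm
      rw [hstep]
      refine tmul_mem_tsubK (H_le_Hvee hH hp) ?_
      show (qK - 1)⁻¹ • (c - r • (1 : A)) ∈ Cvee A C
      refine Algebra.subset_adjoin ?_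
      rw [SetLike.mem_coe, mem_ksmul_iff]
      refine ⟨c - r • 1, ⟨Submodule.sub_mem _ hc (Submodule.smul_mem _ _ hC1), ?_⟩, rfl⟩
      show c - r • 1 ∈ LinearMap.ker (Coalgebra.counit : A →ₗ[K] K)
      rw [LinearMap.mem_ker, map_sub, hr, counit_smul_one, sub_self]
  · refine ⟨by rw [map_zero]; exact zero_mem _, ?_⟩
    rw [map_zero, TensorProduct.zero_tmul, sub_zero, smul_zero]
    exact zero_mem _
  · rintro a b _ _ ⟨ha1, ha2⟩ ⟨hb1, hb2⟩
    refine ⟨by rw [map_add]; exact add_mem ha1 hb1, ?_⟩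
    have : (qK - 1)⁻¹ • (a + b - (epsR (a + b)) ⊗ₜ[K] (1 : A))
        = (qK - 1)⁻¹ • (a - (epsR a) ⊗ₜ[K] (1 : A))
          + (qK - 1)⁻¹ • (b - (epsR b) ⊗ₜ[K] (1 : A)) := by
      rw [← smul_add, map_add, TensorProduct.add_tmul]
      ring_nf
      abel_nf
    rw [this]
    exact add_mem ha2 hb2
  · rintro a _ ⟨ha1, ha2⟩
    refine ⟨by rw [map_neg]; exact neg_mem ha1, ?_⟩
    have : (qK - 1)⁻¹ • (-a - (epsR (-a)) ⊗ₜ[K] (1 : A))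
        = -((qK - 1)⁻¹ • (a - (epsR a) ⊗ₜ[K] (1 : A))) := by
      rw [map_neg, TensorProduct.neg_tmul, ← smul_neg]
      congr 1
      abel
    rw [this]
    exact neg_mem ha2

end Aux

/-- `C_q^▽` is a left coideal of `H^∨`: `Δ(C_q^▽) ⊆ H^∨ ⊗ C_q^▽`. -/
theorem Cvee_leftCoideal (H C : Submodule R A) (hH : IsHopfForm A H)
    (hCH : C ≤ H)
    (hC1 : (1 : A) ∈ C) (hCmul : ∀ x ∈ C, ∀ y ∈ C, x * y ∈ C)
    (hCcoideal : ∀ c ∈ C, Coalgebra.comul (R := K) c ∈ tsubK A H C) :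
    ∀ x ∈ Cvee A C, Coalgebra.comul (R := K) x ∈
      tsubK A (Hvee A H) (Subalgebra.toSubmodule (Cvee A C)) := by
  intro x hx
  refine Algebra.adjoin_induction ?_ ?_ ?_ ?_ hx
  · -- generators
    intro y hy
    rw [SetLike.mem_coe, mem_ksmul_iff] at hy
    obtain ⟨c, ⟨hcC, hcJ⟩, rfl⟩ := hy
    have hcJ' : Coalgebra.counit (R := K) c = 0 := hcJ
    have hz := key_lemma hH hCH hC1 (hCcoideal c hcC)
    have hepsc : epsR (Coalgebra.comul (R := K) c) = c := epsR_comul c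
    rw [map_smul]
    have hsplit : (qK - 1)⁻¹ • (Coalgebra.comul (R := K) c)
        = (qK - 1)⁻¹ • (Coalgebra.comul (R := K) c - c ⊗ₜ[K] (1 : A))
          + ((qK - 1)⁻¹ • c) ⊗ₜ[K] (1 : A) := by
      rw [smul_sub, show ((qK - 1)⁻¹ • c) ⊗ₜ[K] (1 : A)
          = (qK - 1)⁻¹ • (c ⊗ₜ[K] (1 : A)) from TensorProduct.smul_tmul' ((qK - 1)⁻¹) c (1 : A),
        sub_add_cancel]
    rw [hsplit]
    refine add_mem ?_ ?_
    · have := hz.2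
      rwa [hepsc] at this
    · refine tmul_mem_tsubK ?_ ?_
      · refine mem_Hvee_of_term (n := 1) ?_
        rw [mem_ksmul_iff]
        refine ⟨c, ?_, ?_⟩
        · rw [pow_one]; exact ⟨hCH hcC, hcJ⟩
        · rw [pow_one]
      · exact one_mem (Cvee A C)
  · -- algebraMap
    intro r
    have h1 : algebraMap R A r = algebraMap K A (algebraMap R K r) :=
      (IsScalarTower.algebraMap_apply R K A r)
    haveI := smulCommClass_KKA (A := A)
    rw [h1, Bialgebra.comul_algebraMap, Algebra.TensorProduct.algebraMap_apply]
    refine tmul_mem_tsubK ?_ (one_mem (Cvee A C))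
    rw [Algebra.algebraMap_eq_smul_one,
      show (algebraMap R K r) • (1 : A) = r • (1 : A) from algebraMap_smul K r (1 : A)]
    exact Submodule.smul_mem _ r one_mem_Hvee
  · -- add
    intro a b _ _ ha hb
    rw [map_add]
    exact add_mem ha hb
  · -- mul
    intro a b haC hbC ha hb
    rw [Bialgebra.comul_mul]
    refine tsubK_mul_mem (fun u hu v hv => Hvee_mul_mem hu hv)
      (fun u hu v hv => ?_) ha hb
    rw [Subalgebra.mem_toSubmodule] at hu hv ⊢
    exact mul_mem hu hv

end GQDP
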